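/- Fix reals a < b and μ ∈ ℝ and define G(Σ) = ∫_a^b N(ξ|μ,Σ) dξ for Σ > 0. (i) If a < μ < b, then G is strictly decreasing on (0,∞). (ii) If μ ∉ [a,b], let Σ^c(μ) = ((μ−a)² − (μ−b)²) / ( 2 log((μ−a)/(μ−b)) ), which is a well-defined positive real; then G is strictly increasing on (0, Σ^c(μ)) and strictly decreasing on (Σ^c(μ), ∞). -/

import Mathlib

open MeasureTheory Real Set

/-- One-dimensional Gaussian density `N(ξ|μ,v) = (2πv)^{-1/2} exp(−(ξ−μ)²/(2v))`. -/
noncomputable def gaussPDF (μ v ξ : ℝ) : ℝ :=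
  (Real.sqrt (2 * Real.pi * v))⁻¹ * Real.exp (-((ξ - μ) ^ 2) / (2 * v))

section GaussAux

/-- Standard normal density. -/
noncomputable def stdphi (t : ℝ) : ℝ := (Real.sqrt (2 * Real.pi))⁻¹ * Real.exp (-(t^2) / 2)

lemma stdphi_cont : Continuous stdphi := by unfold stdphi; fun_prop

lemma stdphi_pos (t : ℝ) : 0 < stdphi t := by
  unfold stdphi; positivity

/-- Antiderivative of the standard normal density. -/
noncomputable def stdF (x : ℝ) : ℝ := ∫ t in (0:ℝ)..x, stdphi t

lemma stdF_hasDerivAt (x : ℝ) : HasDerivAt stdF (stdphi x) x :=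
  intervalIntegral.integral_hasDerivAt_right (stdphi_cont.intervalIntegrable _ _)
    (stdphi_cont.stronglyMeasurableAtFilter _ _) stdphi_cont.continuousAt

lemma stdphi_scaled {v : ℝ} (hv : 0 < v) (c : ℝ) :
    stdphi (c / Real.sqrt v) = (Real.sqrt (2*Real.pi))⁻¹ * Real.exp (-c^2 / (2*v)) := by
  unfold stdphi
  rw [div_pow, Real.sq_sqrt hv.le]
  congr 1
  ring

lemma inv_sqrt_hasDerivAt {v : ℝ} (hv : 0 < v) (c : ℝ) :
    HasDerivAt (fun v => c / Real.sqrt v) (-c / (2 * v * Real.sqrt v)) v := by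
  have hs : (0:ℝ) < Real.sqrt v := Real.sqrt_pos.mpr hv
  have h := ((Real.hasDerivAt_sqrt hv.ne').inv hs.ne').const_mul c
  have heq : (fun v => c / Real.sqrt v) = fun v => c * (Real.sqrt v)⁻¹ := by
    funext w; rw [div_eq_mul_inv]
  rw [heq]
  refine h.congr_deriv ?_
  rw [Real.sq_sqrt hv.le]
  field_simp

end GaussAux

section GaussAux2

lemma G_eq (a b μ v : ℝ) (hab : a ≤ b) (hv : 0 < v) :
    ∫ ξ in Set.Icc a b, gaussPDF μ v ξ
      = stdF ((b - μ) / Real.sqrt v) - stdF ((a - μ) / Real.sqrt v) := by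
  have hs : (0:ℝ) < Real.sqrt v := Real.sqrt_pos.mpr hv
  have h1 : ∀ ξ : ℝ, gaussPDF μ v ξ = (Real.sqrt v)⁻¹ * stdphi ((ξ - μ) / Real.sqrt v) := by
    intro ξ
    unfold gaussPDF stdphi
    rw [show 2 * Real.pi * v = (2 * Real.pi) * v by ring,
      Real.sqrt_mul (by positivity) v]
    rw [div_pow, Real.sq_sqrt hv.le]
    rw [mul_inv]
    rw [show -((ξ - μ) ^ 2 / v) / 2 = -(ξ - μ) ^ 2 / (2 * v) by ring]
    ring
  rw [MeasureTheory.integral_Icc_eq_integral_Ioc,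
    ← intervalIntegral.integral_of_le hab]
  simp_rw [h1]
  rw [intervalIntegral.integral_const_mul]
  rw [intervalIntegral.integral_comp_sub_right (fun x => stdphi (x / Real.sqrt v)) μ]
  rw [intervalIntegral.integral_comp_div (f := stdphi) hs.ne']
  rw [smul_eq_mul, ← mul_assoc, inv_mul_cancel₀ hs.ne', one_mul]
  unfold stdF
  rw [← intervalIntegral.integral_interval_sub_left
    (stdphi_cont.intervalIntegrable _ _) (stdphi_cont.intervalIntegrable _ _)]

lemma H_hasDerivAt (a b μ : ℝ) {v : ℝ} (hv : 0 < v) :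
    HasDerivAt (fun v => stdF ((b - μ) / Real.sqrt v) - stdF ((a - μ) / Real.sqrt v))
      (((μ - b) * stdphi ((b - μ) / Real.sqrt v) - (μ - a) * stdphi ((a - μ) / Real.sqrt v))
        / (2 * v * Real.sqrt v)) v := by
  have h1 := (stdF_hasDerivAt ((b - μ) / Real.sqrt v)).comp v (inv_sqrt_hasDerivAt hv (b - μ))
  have h2 := (stdF_hasDerivAt ((a - μ) / Real.sqrt v)).comp v (inv_sqrt_hasDerivAt hv (a - μ))
  refine (h1.sub h2).congr_deriv ?_
  field_simp
  ring

lemma key_iff {p q v : ℝ} (hq : 0 < q) (hpq : q < p) (hv : 0 < v) :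
    p * Real.exp (-p^2 / (2*v)) < q * Real.exp (-q^2 / (2*v)) ↔
      v < (p^2 - q^2) / (2 * Real.log (p/q)) := by
  have hp : 0 < p := hq.trans hpq
  have hL : 0 < Real.log (p/q) := Real.log_pos ((one_lt_div hq).mpr hpq)
  have h2v : (0:ℝ) < 2*v := by linarith
  have e1 : p * Real.exp (-p^2/(2*v)) = Real.exp (Real.log p + -p^2/(2*v)) := by
    rw [Real.exp_add, Real.exp_log hp]
  have e2 : q * Real.exp (-q^2/(2*v)) = Real.exp (Real.log q + -q^2/(2*v)) := by
    rw [Real.exp_add, Real.exp_log hq]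
  rw [e1, e2, Real.exp_lt_exp, lt_div_iff₀ (by positivity), Real.log_div hp.ne' hq.ne']
  constructor
  · intro h
    have h' := mul_lt_mul_of_pos_right h h2v
    rw [add_mul, add_mul, div_mul_cancel₀ _ h2v.ne', div_mul_cancel₀ _ h2v.ne'] at h'
    nlinarith [h']
  · intro h
    rw [← mul_lt_mul_iff_of_pos_right h2v, add_mul, add_mul, div_mul_cancel₀ _ h2v.ne',
      div_mul_cancel₀ _ h2v.ne']
    nlinarith [h]

lemma key_iff' {p q v : ℝ} (hq : 0 < q) (hpq : q < p) (hv : 0 < v) :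
    q * Real.exp (-q^2 / (2*v)) < p * Real.exp (-p^2 / (2*v)) ↔
      (p^2 - q^2) / (2 * Real.log (p/q)) < v := by
  have hp : 0 < p := hq.trans hpq
  have hL : 0 < Real.log (p/q) := Real.log_pos ((one_lt_div hq).mpr hpq)
  have h2v : (0:ℝ) < 2*v := by linarith
  have e1 : p * Real.exp (-p^2/(2*v)) = Real.exp (Real.log p + -p^2/(2*v)) := by
    rw [Real.exp_add, Real.exp_log hp]
  have e2 : q * Real.exp (-q^2/(2*v)) = Real.exp (Real.log q + -q^2/(2*v)) := by
    rw [Real.exp_add, Real.exp_log hq]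
  rw [e1, e2, Real.exp_lt_exp, div_lt_iff₀ (by positivity), Real.log_div hp.ne' hq.ne']
  constructor
  · intro h
    have h' := mul_lt_mul_of_pos_right h h2v
    rw [add_mul, add_mul, div_mul_cancel₀ _ h2v.ne', div_mul_cancel₀ _ h2v.ne'] at h'
    nlinarith [h']
  · intro h
    rw [← mul_lt_mul_iff_of_pos_right h2v, add_mul, add_mul, div_mul_cancel₀ _ h2v.ne',
      div_mul_cancel₀ _ h2v.ne']
    nlinarith [h]

lemma Dsign {p q v : ℝ} (hpq : q < p) (hsign : 0 < p * q) (hv : 0 < v) :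
    0 < (p^2 - q^2) / (2 * Real.log (p/q)) ∧
    (v < (p^2 - q^2) / (2 * Real.log (p/q)) →
      p * Real.exp (-p^2 / (2*v)) < q * Real.exp (-q^2 / (2*v))) ∧
    ((p^2 - q^2) / (2 * Real.log (p/q)) < v →
      q * Real.exp (-q^2 / (2*v)) < p * Real.exp (-p^2 / (2*v))) := by
  rcases lt_or_ge 0 q with hq | hq
  · have hp : 0 < p := hq.trans hpq
    have hL : 0 < Real.log (p/q) := Real.log_pos ((one_lt_div hq).mpr hpq)
    have hvc : 0 < (p^2 - q^2) / (2 * Real.log (p/q)) := by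
      apply div_pos (by nlinarith) (by positivity)
    exact ⟨hvc, fun h => (key_iff hq hpq hv).mpr h, fun h => (key_iff' hq hpq hv).mpr h⟩
  · have hq0 : q < 0 := by
      rcases lt_or_eq_of_le hq with h | h
      · exact h
      · exfalso; rw [h] at hsign; simp at hsign
    have hp0 : p < 0 := by nlinarith
    have h1 : (0:ℝ) < -p := by linarith
    have h2 : -p < -q := by linarith
    have hvceq : ((-q)^2 - (-p)^2) / (2 * Real.log ((-q)/(-p)))
        = (p^2 - q^2) / (2 * Real.log (p/q)) := by
      rw [neg_div_neg_eq, show q / p = (p/q)⁻¹ by rw [inv_div], Real.log_inv]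
      rw [show 2 * -Real.log (p/q) = -(2 * Real.log (p/q)) by ring, div_neg]
      rw [show (-q)^2 - (-p)^2 = -(p^2 - q^2) by ring, neg_div, neg_neg]
    have H := key_iff h1 h2 hv
    have H' := key_iff' h1 h2 hv
    rw [hvceq] at H H'
    have hvc : 0 < (p^2 - q^2) / (2 * Real.log (p/q)) := by
      rw [← hvceq]
      have hL : 0 < Real.log ((-q)/(-p)) := Real.log_pos ((one_lt_div h1).mpr h2)
      apply div_pos (by nlinarith) (by positivity)
    refine ⟨hvc, fun h => ?_, fun h => ?_⟩
    · have := H.mpr h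
      rw [show (-q)^2 = q^2 by ring, show (-p)^2 = p^2 by ring] at this
      linarith
    · have := H'.mpr h
      rw [show (-q)^2 = q^2 by ring, show (-p)^2 = p^2 by ring] at this
      linarith

end GaussAux2

/-- The Gaussian box probability `G(v) = ∫_a^b N(ξ|μ,v) dξ` as a function of the variance:
(i) if `a < μ < b`, `G` is strictly decreasing on `(0,∞)`;
(ii) if `μ ∉ [a,b]`, with `vc = ((μ−a)² − (μ−b)²)/(2 log((μ−a)/(μ−b)))`, then `vc > 0`
and `G` is strictly increasing on `(0, vc)` and strictly decreasing on `(vc, ∞)`. -/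
theorem gaussian_box_probability_variance (a b μ : ℝ) (hab : a < b) :
    let G := fun v : ℝ => ∫ ξ in Set.Icc a b, gaussPDF μ v ξ
    ((a < μ ∧ μ < b) → StrictAntiOn G (Set.Ioi 0)) ∧
    (μ ∉ Set.Icc a b →
      let vc := ((μ - a) ^ 2 - (μ - b) ^ 2) / (2 * Real.log ((μ - a) / (μ - b)))
      0 < vc ∧ StrictMonoOn G (Set.Ioo 0 vc) ∧ StrictAntiOn G (Set.Ioi vc)) := by
  intro G
  set H : ℝ → ℝ := fun v => stdF ((b - μ) / Real.sqrt v) - stdF ((a - μ) / Real.sqrt v) with hH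
  set f' : ℝ → ℝ := fun v => ((Real.sqrt (2*Real.pi))⁻¹ *
      ((μ-b) * Real.exp (-(μ-b)^2 / (2*v)) - (μ-a) * Real.exp (-(μ-a)^2 / (2*v))))
      / (2 * v * Real.sqrt v) with hf'
  have hderiv : ∀ v : ℝ, 0 < v → HasDerivAt H (f' v) v := by
    intro v hv
    have h := H_hasDerivAt a b μ hv
    rw [stdphi_scaled hv, stdphi_scaled hv, show (b-μ)^2 = (μ-b)^2 by ring,
      show (a-μ)^2 = (μ-a)^2 by ring] at h
    convert h using 1
    rw [hf']
    ring
  have hGH : ∀ v : ℝ, 0 < v → G v = H v := fun v hv => G_eq a b μ v hab.le hv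
  have hden : ∀ v : ℝ, 0 < v → (0:ℝ) < 2 * v * Real.sqrt v :=
    fun v hv => mul_pos (mul_pos two_pos hv) (Real.sqrt_pos.mpr hv)
  constructor
  · rintro ⟨h1, h2⟩
    have hHa : StrictAntiOn H (Set.Ioi 0) := by
      apply strictAntiOn_of_hasDerivWithinAt_neg (f' := f') (convex_Ioi 0)
      · intro x hx
        exact (hderiv x hx).continuousAt.continuousWithinAt
      · intro x hx
        rw [interior_Ioi] at hx
        exact (hderiv x hx).hasDerivWithinAt
      · intro x hx
        rw [interior_Ioi] at hx
        rw [hf']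
        apply div_neg_of_neg_of_pos _ (hden x hx)
        apply mul_neg_of_pos_of_neg (by positivity)
        have t1 : (μ-b) * Real.exp (-(μ-b)^2 / (2*x)) < 0 :=
          mul_neg_of_neg_of_pos (by linarith) (Real.exp_pos _)
        have t2 : 0 < (μ-a) * Real.exp (-(μ-a)^2 / (2*x)) :=
          mul_pos (by linarith) (Real.exp_pos _)
        linarith
    intro x hx y hy hxy
    rw [show G x = H x from hGH x hx, show G y = H y from hGH y hy]
    exact hHa hx hy hxy
  · intro hμ vc
    have hpq : μ - b < μ - a := by linarith
    have hsign : 0 < (μ - a) * (μ - b) := by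
      rw [Set.mem_Icc, not_and_or] at hμ
      push_neg at hμ
      rcases hμ with h | h
      · exact mul_pos_of_neg_of_neg (by linarith) (by linarith)
      · exact mul_pos (by linarith) (by linarith)
    have hvc : 0 < vc := (Dsign hpq hsign one_pos).1
    refine ⟨hvc, ?_, ?_⟩
    · have hHm : StrictMonoOn H (Set.Ioo 0 vc) := by
        apply strictMonoOn_of_hasDerivWithinAt_pos (f' := f') (convex_Ioo 0 vc)
        · intro x hx
          exact (hderiv x hx.1).continuousAt.continuousWithinAt
        · intro x hx
          rw [interior_Ioo] at hx
          exact (hderiv x hx.1).hasDerivWithinAt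
        · intro x hx
          rw [interior_Ioo] at hx
          have hnum := (Dsign hpq hsign hx.1).2.1 hx.2
          rw [hf']
          apply div_pos _ (hden x hx.1)
          apply mul_pos (by positivity)
          linarith
      intro x hx y hy hxy
      rw [show G x = H x from hGH x hx.1, show G y = H y from hGH y hy.1]
      exact hHm hx hy hxy
    · have hHa : StrictAntiOn H (Set.Ioi vc) := by
        apply strictAntiOn_of_hasDerivWithinAt_neg (f' := f') (convex_Ioi vc)
        · intro x hx
          exact (hderiv x (hvc.trans hx)).continuousAt.continuousWithinAt
        · intro x hx
          rw [interior_Ioi] at hx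
          exact (hderiv x (hvc.trans hx)).hasDerivWithinAt
        · intro x hx
          rw [interior_Ioi] at hx
          have hnum := (Dsign hpq hsign (hvc.trans hx)).2.2 hx
          rw [hf']
          apply div_neg_of_neg_of_pos _ (hden x (hvc.trans hx))
          apply mul_neg_of_pos_of_neg (by positivity)
          linarith
      intro x hx y hy hxy
      rw [show G x = H x from hGH x (hvc.trans hx), show G y = H y from hGH y (hvc.trans hy)]
      exact hHa hx hy hxy
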